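/- There exist two non-congruent triangles, each with all three sides perfect squares of positive integers, having the same perimeter and the same area. -/
import Mathlib

/-- A triangle with integer sides: positive sides satisfying the strict triangle
inequalities. -/
structure IntTriangle where
  x : ℤ
  y : ℤ
  z : ℤ
  hx : 0 < x
  hy : 0 < y
  hz : 0 < z
  t1 : x < y + z
  t2 : y < x + z
  t3 : z < x + y

/-- The perimeter of an integer triangle. -/
def IntTriangle.perimeter (T : IntTriangle) : ℤ := T.x + T.y + T.z

/-- The area of a triangle via Heron's formula. -/
noncomputable def IntTriangle.area (T : IntTriangle) : ℝ :=
  Real.sqrt (((T.x : ℝ) + T.y + T.z) * (T.x + T.y - T.z) * (T.x - T.y + T.z)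
    * (-(T.x : ℝ) + T.y + T.z)) / 4

/-- Two triangles are congruent iff their multisets of side lengths agree. -/
def IntTriangle.Congruent (T₁ T₂ : IntTriangle) : Prop :=
  ({T₁.x, T₁.y, T₁.z} : Multiset ℤ) = {T₂.x, T₂.y, T₂.z}

/-- All sides are perfect squares of positive integers. -/
def IntTriangle.SquareSides (T : IntTriangle) : Prop :=
  (∃ a : ℤ, 0 < a ∧ T.x = a^2) ∧ (∃ b : ℤ, 0 < b ∧ T.y = b^2) ∧
    (∃ c : ℤ, 0 < c ∧ T.z = c^2)

theorem stmt4 :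
    ∃ T₁ T₂ : IntTriangle, ¬ T₁.Congruent T₂ ∧ T₁.SquareSides ∧ T₂.SquareSides ∧
      T₁.perimeter = T₂.perimeter ∧ T₁.area = T₂.area := by
  refine ⟨⟨436921, 2244004, 2295225, by norm_num, by norm_num, by norm_num,
      by norm_num, by norm_num, by norm_num⟩,
    ⟨848241, 1716100, 2411809, by norm_num, by norm_num, by norm_num,
      by norm_num, by norm_num, by norm_num⟩, ?_, ?_, ?_, ?_, ?_⟩
  · intro h
    have : (436921 : ℤ) ∈ ({848241, 1716100, 2411809} : Multiset ℤ) := by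
      rw [← h]; simp
    simp at this
  · exact ⟨⟨661, by norm_num, by norm_num⟩, ⟨1498, by norm_num, by norm_num⟩,
      ⟨1515, by norm_num, by norm_num⟩⟩
  · exact ⟨⟨921, by norm_num, by norm_num⟩, ⟨1310, by norm_num, by norm_num⟩,
      ⟨1553, by norm_num, by norm_num⟩⟩
  · rfl
  · unfold IntTriangle.area
    norm_num
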